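/- Let K ≥ 2 be an integer, n ≥ 1, λ_W, λ_H > 0, λ_b ≥ 0, ρ ≥ 0, and set a = √(λ_W/(n λ_H)). Then the equation in the real variable b, λ_b b = (K−1)/(K(1+exp(b + a ρ/(K(K−1))))) − 1/(K(1+exp(a ρ/K − b))), has exactly one real solution. -/
import Mathlib
set_option maxHeartbeats 1000000


/-- **Uniqueness of the optimal classifier bias (Lemma 5).**  The bias equation
`λ_b b = (K−1)/(K(1+exp(b + aρ/(K(K−1))))) − 1/(K(1+exp(aρ/K − b)))`,
with `a = √(λ_W/(n λ_H))`, has exactly one real solution. -/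
theorem bias_equation_unique_solution (K n : ℕ) (hK : 2 ≤ K) (hn : 1 ≤ n)
    (lamW lamH lamb ρ : ℝ) (hlamW : 0 < lamW) (hlamH : 0 < lamH)
    (hlamb : 0 ≤ lamb) (hρ : 0 ≤ ρ)
    (a : ℝ) (ha : a = Real.sqrt (lamW / ((n : ℝ) * lamH))) :
    ∃! b : ℝ,
      lamb * b =
        ((K : ℝ) - 1) /
            ((K : ℝ) * (1 + Real.exp (b + a * ρ / ((K : ℝ) * ((K : ℝ) - 1))))) -
          1 / ((K : ℝ) * (1 + Real.exp (a * ρ / (K : ℝ) - b))) := by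
  have hK2 : (2 : ℝ) ≤ (K : ℝ) := by exact_mod_cast hK
  have hKpos : (0 : ℝ) < (K : ℝ) := by linarith
  have ha0 : 0 ≤ a := ha ▸ Real.sqrt_nonneg _
  set Kr := (K : ℝ) with hKr
  set d := a * ρ / Kr with hd
  set c := a * ρ / (Kr * (Kr - 1)) with hc
  clear_value Kr
  have hd0 : 0 ≤ d := div_nonneg (mul_nonneg ha0 hρ) hKpos.le
  have hc0 : 0 ≤ c := div_nonneg (mul_nonneg ha0 hρ) (by nlinarith)
  set g : ℝ → ℝ := fun b =>
    lamb * b + 1 / (Kr * (1 + Real.exp (d - b))) - (Kr - 1) / (Kr * (1 + Real.exp (b + c)))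
    with hg
  clear_value d c g
  have den_pos : ∀ x : ℝ, 0 < Kr * (1 + Real.exp x) := fun x =>
    mul_pos hKpos (by positivity)
  -- strict monotonicity
  have hmono : StrictMono g := by
    intro x y hxy
    have h1 : lamb * x ≤ lamb * y := mul_le_mul_of_nonneg_left hxy.le hlamb
    have hE : Real.exp (d - y) < Real.exp (d - x) := Real.exp_lt_exp.mpr (by linarith)
    have h2 : 1 / (Kr * (1 + Real.exp (d - x))) < 1 / (Kr * (1 + Real.exp (d - y))) := by
      apply one_div_lt_one_div_of_lt (den_pos _)
      exact mul_lt_mul_of_pos_left (by linarith) hKpos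
    have hE' : Real.exp (x + c) < Real.exp (y + c) := Real.exp_lt_exp.mpr (by linarith)
    have h3 : (Kr - 1) / (Kr * (1 + Real.exp (y + c))) <
        (Kr - 1) / (Kr * (1 + Real.exp (x + c))) := by
      apply div_lt_div_of_pos_left (by linarith) (den_pos _)
      exact mul_lt_mul_of_pos_left (by linarith) hKpos
    simp only [hg]
    linarith
  have hcont : Continuous g := by
    rw [hg]
    apply Continuous.sub
    · apply Continuous.add (by continuity)
      exact Continuous.div continuous_const (by continuity) fun x => (den_pos _).ne'
    · exact Continuous.div continuous_const (by continuity) fun x => (den_pos _).ne'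
  -- endpoints
  set b₀ : ℝ := -(c + 1) with hb₀def
  set b₁ : ℝ := d + Real.log (4 * Kr) with hb₁def
  clear_value b₀ b₁
  have hlog : 0 < Real.log (4 * Kr) := Real.log_pos (by linarith)
  have hb01 : b₀ ≤ b₁ := by simp only [hb₀def, hb₁def]; linarith
  -- g b₀ < 0
  have hgb0 : g b₀ < 0 := by
    have e1 : d - b₀ = d + c + 1 := by simp only [hb₀def]; ring
    have e2 : b₀ + c = -1 := by simp only [hb₀def]; ring
    set E1 := Real.exp (d - b₀) with hE1def
    set E2 := Real.exp (b₀ + c) with hE2def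
    clear_value E1 E2
    have hE1 : (2 : ℝ) < E1 := by
      rw [hE1def, e1]
      have h1 : Real.exp 1 ≤ Real.exp (d + c + 1) := Real.exp_le_exp.mpr (by linarith)
      have h9 := Real.exp_one_gt_d9
      linarith
    have hE2 : E2 < 1 := by
      rw [hE2def, e2]; exact Real.exp_lt_one_iff.mpr (by norm_num)
    have hE2' : 0 < E2 := hE2def ▸ Real.exp_pos _
    have ht : 1 / (Kr * (1 + E1)) < (Kr - 1) / (Kr * (1 + E2)) := by
      rw [div_lt_div_iff₀ (mul_pos hKpos (by linarith : (0:ℝ) < 1 + E1))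
        (mul_pos hKpos (by linarith : (0:ℝ) < 1 + E2))]
      have hA : Kr * (1 + E2) < Kr * 2 :=
        mul_lt_mul_of_pos_left (by linarith) hKpos
      have hB : Kr * 3 ≤ Kr * (1 + E1) :=
        mul_le_mul_of_nonneg_left (by linarith) hKpos.le
      have hC : Kr * (1 + E1) ≤ (Kr - 1) * (Kr * (1 + E1)) :=
        le_mul_of_one_le_left (mul_nonneg hKpos.le (by linarith)) (by linarith)
      linarith
    have hb0neg : lamb * b₀ ≤ 0 :=
      mul_nonpos_iff.mpr (Or.inl ⟨hlamb, by simp only [hb₀def]; linarith⟩)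
    simp only [hg, ← hE1def, ← hE2def]
    linarith
  -- g b₁ > 0
  have hgb1 : 0 < g b₁ := by
    have e1 : Real.exp (d - b₁) = 1 / (4 * Kr) := by
      simp only [hb₁def]
      rw [show d - (d + Real.log (4 * Kr)) = -Real.log (4 * Kr) by ring,
        Real.exp_neg, Real.exp_log (by linarith), one_div]
    have hE1 : Real.exp (d - b₁) ≤ 1 := by
      rw [e1]; rw [div_le_one (by linarith)]; linarith
    have hE3 : 4 * Kr ≤ Real.exp (b₁ + c) := by
      have : Real.exp (Real.log (4 * Kr)) ≤ Real.exp (b₁ + c) :=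
        Real.exp_le_exp.mpr (by simp only [hb₁def]; linarith)
      rwa [Real.exp_log (by linarith)] at this
    set E1 := Real.exp (d - b₁) with hE1def
    set E3 := Real.exp (b₁ + c) with hE3def
    clear_value E1 E3
    have hE1' : 0 < E1 := hE1def ▸ Real.exp_pos _
    have ht2 : 1 / (2 * Kr) ≤ 1 / (Kr * (1 + E1)) := by
      apply one_div_le_one_div_of_le (mul_pos hKpos (by linarith : (0:ℝ) < 1 + E1))
      have : Kr * (1 + E1) ≤ Kr * 2 :=
        mul_le_mul_of_nonneg_left (by linarith) hKpos.le
      linarith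
    have ht3 : (Kr - 1) / (Kr * (1 + E3)) < 1 / (2 * Kr) := by
      rw [div_lt_div_iff₀ (mul_pos hKpos (by linarith : (0:ℝ) < 1 + E3))
        (by linarith : (0:ℝ) < 2 * Kr)]
      have hA : Kr * (4 * Kr) ≤ Kr * E3 :=
        mul_le_mul_of_nonneg_left hE3 hKpos.le
      nlinarith [sq_nonneg Kr, mul_pos hKpos hKpos]
    have hb1pos : 0 ≤ lamb * b₁ :=
      mul_nonneg hlamb (by simp only [hb₁def]; linarith)
    simp only [hg, ← hE1def, ← hE3def]
    linarith
  -- IVT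
  have hmem : (0 : ℝ) ∈ Set.Icc (g b₀) (g b₁) := ⟨hgb0.le, hgb1.le⟩
  obtain ⟨b, -, hb⟩ := intermediate_value_Icc hb01 hcont.continuousOn hmem
  refine ⟨b, ?_, ?_⟩
  · have : g b = 0 := hb
    simp only [hg] at this
    linarith
  · intro y hy
    apply hmono.injective
    have hy0 : g y = 0 := by simp only [hg]; linarith
    rw [hy0, hb]
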